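/- Negative time flow of non-commutative Laurent bi-orthogonal polynomials (Proposition 4.8): let D : R → R satisfy D(a + b) = D(a) + D(b) and D(a·b) = D(a)·b + a·D(b) for all a, b ∈ R, and suppose D(m(j)) = m(j−1) for every j ∈ ℤ. Then for every n ≥ 1, assuming all Toeplitz matrices T and all quasi-determinants H, G occurring below are invertible (resp. nonzero), applying D to each coefficient of the Laurent polynomial (Q_n^{(0)})* yields the Laurent polynomial (z^{−1}·(Q_{n−1}^{(0)})* − (Q_n^{(0)})*)·ξ_{n−1}, where ξ_{n−1} := ψ_{n−1}^{(0)} − φ_{n−1}^{(−1)}; i.e. for every r, D of the coefficient of z^{−r} in (Q_n^{(0)})* equals the coefficient of z^{−r} in (z^{−1}·(Q_{n−1}^{(0)})* − (Q_n^{(0)})*)·ξ_{n−1}. -/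

import Mathlib

/-- The `n × n` shifted Toeplitz matrix `T_n^{(k)} = (m(k + i − j))_{i,j=0}^{n−1}`. -/
noncomputable def Tmat {R : Type*} [DivisionRing R] (m : ℤ → R) (k : ℤ) (n : ℕ) :
    Matrix (Fin n) (Fin n) R :=
  Matrix.of fun i j => m (k + (i.val : ℤ) - (j.val : ℤ))

/-- The Laurent polynomial `(Q_n^{(k)})*(z) = z^{−n} − Σ_{i=0}^{n−1} c_i z^{−i}`, where
`(c_0, …, c_{n−1})ᵀ = (T_n^{(k)})⁻¹·(m(k−n), …, m(k−1))ᵀ`, given as the coefficient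
function `ℤ → R` (the value at `e` is the coefficient of `z^e`). -/
noncomputable def Qs {R : Type*} [DivisionRing R] (m : ℤ → R) (k : ℤ) (n : ℕ) :
    ℤ → R := fun e =>
  if e = -(n : ℤ) then 1
  else if he : -(n : ℤ) < e ∧ e ≤ 0 then
    -(∑ j : Fin n, Ring.inverse (Tmat m k n) ⟨(-e).toNat, by omega⟩ j *
      m (k - (n : ℤ) + (j.val : ℤ)))
  else 0

/-- The quasi-determinant
`H_n^{(k)} = m(k) − (m(k+n), …, m(k+1))·(T_n^{(k)})⁻¹·(m(k−n), …, m(k−1))ᵀ`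
(with `H_0^{(k)} = m(k)`). -/
noncomputable def Hq {R : Type*} [DivisionRing R] (m : ℤ → R) (n : ℕ) (k : ℤ) : R :=
  m k - ∑ j : Fin n, ∑ l : Fin n,
    m (k + (n : ℤ) - (j.val : ℤ)) * Ring.inverse (Tmat m k n) j l *
      m (k - (n : ℤ) + (l.val : ℤ))

/-- The quasi-determinant
`G_n^{(k)} = m(k−n) − (m(k), …, m(k−n+1))·(T_n^{(k+1)})⁻¹·(m(k+1−n), …, m(k))ᵀ`
(with `G_0^{(k)} = m(k)`). -/
noncomputable def Gq {R : Type*} [DivisionRing R] (m : ℤ → R) (n : ℕ) (k : ℤ) : R :=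
  m (k - (n : ℤ)) - ∑ j : Fin n, ∑ l : Fin n,
    m (k - (j.val : ℤ)) * Ring.inverse (Tmat m (k + 1) n) j l *
      m (k + 1 - (n : ℤ) + (l.val : ℤ))

/-- `ψ_n^{(k)} = (H_n^{(k)})⁻¹·H_n^{(k−1)}`. -/
noncomputable def psi {R : Type*} [DivisionRing R] (m : ℤ → R) (n : ℕ) (k : ℤ) : R :=
  (Hq m n k)⁻¹ * Hq m n (k - 1)

/-- `φ_n^{(k)} = (G_n^{(k)})⁻¹·G_n^{(k−1)}`. -/
noncomputable def phi {R : Type*} [DivisionRing R] (m : ℤ → R) (n : ℕ) (k : ℤ) : R :=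
  (Gq m n k)⁻¹ * Gq m n (k - 1)

namespace S18
variable {R : Type*} [DivisionRing R]
variable {D : R → R}

lemma mcg (m : ℤ → R) {a b : ℤ} (h : a = b) : m a = m b := congrArg m h

lemma solve_eq {n : ℕ} (A : Matrix (Fin n) (Fin n) R) (hA : IsUnit A) (v : Fin n → R) (i : Fin n) :
    ∑ l, A i l * (∑ j, Ring.inverse A l j * v j) = v i := by
  have h1 : A * Ring.inverse A = 1 := Ring.mul_inverse_cancel A hA
  calc ∑ l, A i l * (∑ j, Ring.inverse A l j * v j)
      = ∑ l, ∑ j, A i l * Ring.inverse A l j * v j := by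
        simp [Finset.mul_sum, mul_assoc]
    _ = ∑ j, (∑ l, A i l * Ring.inverse A l j) * v j := by
        rw [Finset.sum_comm]; simp [Finset.sum_mul]
    _ = ∑ j, (1 : Matrix (Fin n) (Fin n) R) i j * v j := by
        simp only [← Matrix.mul_apply, h1]
    _ = v i := by simp [Matrix.one_apply]

lemma cancel_eq {n : ℕ} (A : Matrix (Fin n) (Fin n) R) (hA : IsUnit A) (x : Fin n → R) (i : Fin n) :
    ∑ j, Ring.inverse A i j * (∑ l, A j l * x l) = x i := by
  have h1 : Ring.inverse A * A = 1 := Ring.inverse_mul_cancel A hA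
  calc ∑ j, Ring.inverse A i j * (∑ l, A j l * x l)
      = ∑ j, ∑ l, Ring.inverse A i j * A j l * x l := by
        simp [Finset.mul_sum, mul_assoc]
    _ = ∑ l, (∑ j, Ring.inverse A i j * A j l) * x l := by
        rw [Finset.sum_comm]; simp [Finset.sum_mul]
    _ = ∑ l, (1 : Matrix (Fin n) (Fin n) R) i l * x l := by
        simp only [← Matrix.mul_apply, h1]
    _ = x i := by simp [Matrix.one_apply]

lemma unique_sol {n : ℕ} (A : Matrix (Fin n) (Fin n) R) (hA : IsUnit A) (x y : Fin n → R)
    (h : ∀ i, ∑ l, A i l * x l = ∑ l, A i l * y l) (i : Fin n) : x i = y i := by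
  rw [← cancel_eq A hA x i, ← cancel_eq A hA y i]
  exact Finset.sum_congr rfl fun j _ => by rw [h j]

lemma D_zero (hadd : ∀ a b : R, D (a + b) = D a + D b) : D 0 = 0 := by
  have h := hadd 0 0
  rw [add_zero] at h
  exact (add_left_cancel (a := D 0) (by rw [← h, add_zero])).symm

lemma D_one (hmul : ∀ a b : R, D (a * b) = D a * b + a * D b) : D 1 = 0 := by
  have h := hmul 1 1
  rw [mul_one, mul_one, one_mul] at h
  exact (add_left_cancel (a := D 1) (by rw [← h, add_zero])).symm

lemma D_sum (hadd : ∀ a b : R, D (a + b) = D a + D b) {ι : Type*} (s : Finset ι) (f : ι → R) :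
    D (∑ i ∈ s, f i) = ∑ i ∈ s, D (f i) := by
  classical
  induction s using Finset.induction with
  | empty => simpa using D_zero hadd
  | insert a s h ih => simp [Finset.sum_insert h, hadd, ih]

lemma D_neg (hadd : ∀ a b : R, D (a + b) = D a + D b) (a : R) : D (-a) = -D a := by
  have h := hadd a (-a)
  rw [add_neg_cancel, D_zero hadd] at h
  exact (neg_eq_of_add_eq_zero_right h.symm).symm

lemma D_inverse (hadd : ∀ a b : R, D (a + b) = D a + D b)
    (hmul : ∀ a b : R, D (a * b) = D a * b + a * D b)
    {n : ℕ} (A : Matrix (Fin n) (Fin n) R) (hA : IsUnit A) (i j : Fin n) :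
    D (Ring.inverse A i j) = -∑ a, ∑ b, Ring.inverse A i a * D (A a b) * Ring.inverse A b j := by
  set B := Ring.inverse A with hB
  have hD1 : D (1 : R) = 0 := D_one hmul
  have key : ∀ a : Fin n, ∑ b, (D (A a b) * B b j + A a b * D (B b j)) = 0 := by
    intro a
    have h1 : (A * B) a j = (1 : Matrix (Fin n) (Fin n) R) a j := by
      rw [Ring.mul_inverse_cancel A hA]
    rw [Matrix.mul_apply, Matrix.one_apply] at h1
    have h2 := congrArg D h1
    rw [D_sum hadd] at h2
    have h3 : D (if a = j then (1:R) else 0) = 0 := by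
      split <;> simp [hD1, D_zero hadd]
    rw [h3] at h2
    calc ∑ b, (D (A a b) * B b j + A a b * D (B b j))
        = ∑ b, D (A a b * B b j) := by
          exact Finset.sum_congr rfl fun b _ => (hmul _ _).symm
      _ = 0 := h2
  have h4 : ∑ a, B i a * (∑ b, (D (A a b) * B b j + A a b * D (B b j))) = 0 := by
    simp [key]
  have h5 : (∑ a, ∑ b, B i a * (D (A a b) * B b j))
      + ∑ a, B i a * (∑ b, A a b * D (B b j)) = 0 := by
    rw [← h4, ← Finset.sum_add_distrib]
    refine Finset.sum_congr rfl fun a _ => ?_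
    simp [Finset.mul_sum, mul_add, Finset.sum_add_distrib]
  have h6 : ∑ a, B i a * (∑ b, A a b * D (B b j)) = D (B i j) :=
    cancel_eq A hA (fun b => D (B b j)) i
  rw [h6] at h5
  have h7 : D (B i j) = -(∑ a, ∑ b, B i a * (D (A a b) * B b j)) :=
    (neg_eq_of_add_eq_zero_right h5).symm
  rw [h7]
  congr 1
  exact Finset.sum_congr rfl fun a _ => Finset.sum_congr rfl fun b _ => by rw [mul_assoc]

section Setup
variable (m : ℤ → R) (ν : ℕ)

noncomputable def cc (i : Fin (ν+1)) : R :=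
  ∑ j : Fin (ν+1), Ring.inverse (Tmat m 0 (ν+1)) i j * m (0 - ((ν+1 : ℕ) : ℤ) + (j.val : ℤ))

noncomputable def bb (i : Fin ν) : R :=
  ∑ j : Fin ν, Ring.inverse (Tmat m 0 ν) i j * m (0 - (ν : ℤ) + (j.val : ℤ))

noncomputable def dd (i : Fin ν) : R :=
  ∑ j : Fin ν, Ring.inverse (Tmat m 0 ν) i j * m (-1 - (ν : ℤ) + (j.val : ℤ))

noncomputable def yv (i : Fin ν) : R :=
  ∑ j : Fin ν, Ring.inverse (Tmat m (-1) ν) i j * m (-1 - (ν : ℤ) + (j.val : ℤ))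

noncomputable def ww (i : Fin (ν+1)) : R :=
  ∑ j : Fin (ν+1), Ring.inverse (Tmat m 0 (ν+1)) i j * m (-1 - ((ν+1 : ℕ) : ℤ) + (j.val : ℤ))

noncomputable def chi : R :=
  (Hq m ν 0)⁻¹ * (m (-1) - ∑ j : Fin ν, m ((ν : ℤ) - (j.val : ℤ)) * dd m ν j)

noncomputable def Yc : R :=
  if h : 0 < ν then yv m ν ⟨ν - 1, by omega⟩ else 0

noncomputable def ssv (i : Fin (ν+1)) : R :=
  Fin.cases 0 (fun l => cc m ν l.castSucc) i

noncomputable def bbv (i : Fin (ν+1)) : R :=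
  Fin.cases 0 (fun l => bb m ν l) i

variable {m ν}

lemma Tc_row (hT1 : IsUnit (Tmat m 0 (ν+1))) (i : Fin (ν+1)) :
    ∑ l, m ((i.val : ℤ) - (l.val : ℤ)) * cc m ν l = m ((i.val : ℤ) - ν - 1) := by
  have h := solve_eq (Tmat m 0 (ν+1)) hT1 (fun j => m (0 - ((ν+1 : ℕ) : ℤ) + (j.val : ℤ))) i
  calc ∑ l, m ((i.val : ℤ) - (l.val : ℤ)) * cc m ν l
      = ∑ l, Tmat m 0 (ν+1) i l * (∑ j, Ring.inverse (Tmat m 0 (ν+1)) l j *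
          m (0 - ((ν+1 : ℕ) : ℤ) + (j.val : ℤ))) := by
        refine Finset.sum_congr rfl fun l _ => ?_
        rw [cc, Tmat, Matrix.of_apply, mcg m (by omega : (0 + (i.val:ℤ) - l.val) = (i.val:ℤ) - l.val)]
    _ = m (0 - ((ν+1 : ℕ) : ℤ) + (i.val : ℤ)) := h
    _ = m ((i.val : ℤ) - ν - 1) := mcg m (by omega)

lemma Tb_row (hT2 : IsUnit (Tmat m 0 ν)) (i : Fin ν) :
    ∑ l, m ((i.val : ℤ) - (l.val : ℤ)) * bb m ν l = m ((i.val : ℤ) - ν) := by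
  have h := solve_eq (Tmat m 0 ν) hT2 (fun j => m (0 - (ν : ℤ) + (j.val : ℤ))) i
  calc ∑ l, m ((i.val : ℤ) - (l.val : ℤ)) * bb m ν l
      = ∑ l, Tmat m 0 ν i l * (∑ j, Ring.inverse (Tmat m 0 ν) l j *
          m (0 - (ν : ℤ) + (j.val : ℤ))) := by
        refine Finset.sum_congr rfl fun l _ => ?_
        rw [bb, Tmat, Matrix.of_apply, mcg m (by omega : (0 + (i.val:ℤ) - l.val) = (i.val:ℤ) - l.val)]
    _ = m (0 - (ν : ℤ) + (i.val : ℤ)) := h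
    _ = m ((i.val : ℤ) - ν) := mcg m (by omega)

lemma Td_row (hT2 : IsUnit (Tmat m 0 ν)) (i : Fin ν) :
    ∑ l, m ((i.val : ℤ) - (l.val : ℤ)) * dd m ν l = m ((i.val : ℤ) - ν - 1) := by
  have h := solve_eq (Tmat m 0 ν) hT2 (fun j => m (-1 - (ν : ℤ) + (j.val : ℤ))) i
  calc ∑ l, m ((i.val : ℤ) - (l.val : ℤ)) * dd m ν l
      = ∑ l, Tmat m 0 ν i l * (∑ j, Ring.inverse (Tmat m 0 ν) l j *
          m (-1 - (ν : ℤ) + (j.val : ℤ))) := by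
        refine Finset.sum_congr rfl fun l _ => ?_
        rw [dd, Tmat, Matrix.of_apply, mcg m (by omega : (0 + (i.val:ℤ) - l.val) = (i.val:ℤ) - l.val)]
    _ = m (-1 - (ν : ℤ) + (i.val : ℤ)) := h
    _ = m ((i.val : ℤ) - ν - 1) := mcg m (by omega)

lemma Ty_row (hT3 : IsUnit (Tmat m (-1) ν)) (i : Fin ν) :
    ∑ l, m ((i.val : ℤ) - 1 - (l.val : ℤ)) * yv m ν l = m ((i.val : ℤ) - ν - 1) := by
  have h := solve_eq (Tmat m (-1) ν) hT3 (fun j => m (-1 - (ν : ℤ) + (j.val : ℤ))) i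
  calc ∑ l, m ((i.val : ℤ) - 1 - (l.val : ℤ)) * yv m ν l
      = ∑ l, Tmat m (-1) ν i l * (∑ j, Ring.inverse (Tmat m (-1) ν) l j *
          m (-1 - (ν : ℤ) + (j.val : ℤ))) := by
        refine Finset.sum_congr rfl fun l _ => ?_
        rw [yv, Tmat, Matrix.of_apply, mcg m (by omega : (-1 + (i.val:ℤ) - l.val) = (i.val:ℤ) - 1 - l.val)]
    _ = m (-1 - (ν : ℤ) + (i.val : ℤ)) := h
    _ = m ((i.val : ℤ) - ν - 1) := mcg m (by omega)

lemma Tw_row (hT1 : IsUnit (Tmat m 0 (ν+1))) (i : Fin (ν+1)) :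
    ∑ l, m ((i.val : ℤ) - (l.val : ℤ)) * ww m ν l = m ((i.val : ℤ) - ν - 2) := by
  have h := solve_eq (Tmat m 0 (ν+1)) hT1 (fun j => m (-1 - ((ν+1 : ℕ) : ℤ) + (j.val : ℤ))) i
  calc ∑ l, m ((i.val : ℤ) - (l.val : ℤ)) * ww m ν l
      = ∑ l, Tmat m 0 (ν+1) i l * (∑ j, Ring.inverse (Tmat m 0 (ν+1)) l j *
          m (-1 - ((ν+1 : ℕ) : ℤ) + (j.val : ℤ))) := by
        refine Finset.sum_congr rfl fun l _ => ?_
        rw [ww, Tmat, Matrix.of_apply, mcg m (by omega : (0 + (i.val:ℤ) - l.val) = (i.val:ℤ) - l.val)]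
    _ = m (-1 - ((ν+1 : ℕ) : ℤ) + (i.val : ℤ)) := h
    _ = m ((i.val : ℤ) - ν - 2) := mcg m (by omega)

lemma Hq0_fold : Hq m ν 0 = m 0 - ∑ j : Fin ν, m ((ν : ℤ) - (j.val : ℤ)) * bb m ν j := by
  rw [Hq]
  congr 1
  refine Finset.sum_congr rfl fun j _ => ?_
  rw [bb, Finset.mul_sum]
  refine Finset.sum_congr rfl fun l _ => ?_
  rw [mcg m (by omega : (0:ℤ) + (ν:ℤ) - (j.val:ℤ) = (ν:ℤ) - (j.val:ℤ)), mul_assoc]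

lemma Hqm1_fold : Hq m ν (-1) = m (-1) - ∑ j : Fin ν, m ((ν : ℤ) - 1 - (j.val : ℤ)) * yv m ν j := by
  rw [Hq]
  congr 1
  refine Finset.sum_congr rfl fun j _ => ?_
  rw [yv, Finset.mul_sum]
  refine Finset.sum_congr rfl fun l _ => ?_
  rw [mcg m (by omega : (-1:ℤ) + (ν:ℤ) - (j.val:ℤ) = (ν:ℤ) - 1 - (j.val:ℤ)), mul_assoc]

lemma Gqm1_fold : Gq m ν (-1) = m (-1 - ν) - ∑ j : Fin ν, m (-1 - (j.val : ℤ)) * bb m ν j := by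
  rw [Gq, show ((-1:ℤ)+1) = (0:ℤ) by norm_num]
  congr 1
  refine Finset.sum_congr rfl fun j _ => ?_
  rw [bb, Finset.mul_sum]
  refine Finset.sum_congr rfl fun l _ => ?_
  rw [mul_assoc]

lemma Gqm2_fold : Gq m ν (-2) = m (-2 - ν) - ∑ j : Fin ν, m (-2 - (j.val : ℤ)) * yv m ν j := by
  rw [Gq, show ((-2:ℤ)+1) = (-1:ℤ) by norm_num]
  congr 1
  refine Finset.sum_congr rfl fun j _ => ?_
  rw [yv, Finset.mul_sum]
  refine Finset.sum_congr rfl fun l _ => ?_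
  rw [mul_assoc]

lemma GqN_fold : Gq m (ν+1) (-1) = m (-2 - ν) - ∑ j : Fin (ν+1), m (-1 - (j.val : ℤ)) * cc m ν j := by
  rw [Gq, show ((-1:ℤ)+1) = (0:ℤ) by norm_num]
  congr 1
  · exact mcg m (by push_cast; ring)
  refine Finset.sum_congr rfl fun j _ => ?_
  rw [cc, Finset.mul_sum]
  refine Finset.sum_congr rfl fun l _ => ?_
  rw [mul_assoc]

lemma sum_ssv (g : Fin (ν+1) → R) :
    ∑ l, g l * ssv m ν l = ∑ l : Fin ν, g l.succ * cc m ν l.castSucc := by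
  rw [Fin.sum_univ_succ]
  simp [ssv]

lemma sum_bbv (g : Fin (ν+1) → R) :
    ∑ l, g l * bbv m ν l = ∑ l : Fin ν, g l.succ * bb m ν l := by
  rw [Fin.sum_univ_succ]
  simp [bbv]

lemma cc_struct (hT1 : IsUnit (Tmat m 0 (ν+1))) (hT2 : IsUnit (Tmat m 0 ν))
    (hH1 : Hq m ν 0 ≠ 0) :
    ∀ i : Fin (ν+1), cc m ν i
      = Fin.lastCases (chi m ν) (fun l => dd m ν l - bb m ν l * chi m ν) i := by
  intro i
  refine unique_sol (Tmat m 0 (ν+1)) hT1 _ _ (fun i' => ?_) i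
  have lhs : ∑ l, Tmat m 0 (ν+1) i' l * cc m ν l = m ((i'.val : ℤ) - ν - 1) := by
    rw [← Tc_row hT1 i']
    refine Finset.sum_congr rfl fun l _ => ?_
    rw [Tmat, Matrix.of_apply, mcg m (by omega : (0:ℤ) + (i'.val:ℤ) - (l.val:ℤ) = (i'.val:ℤ) - (l.val:ℤ))]
  rw [lhs]
  rw [Fin.sum_univ_castSucc]
  have hlast : Tmat m 0 (ν+1) i' (Fin.last ν) *
      (Fin.lastCases (motive := fun _ => R) (chi m ν)
        (fun l => dd m ν l - bb m ν l * chi m ν) (Fin.last ν))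
      = m ((i'.val : ℤ) - ν) * chi m ν := by
    rw [Fin.lastCases_last, Tmat, Matrix.of_apply]
    rw [mcg m (show
      (0:ℤ) + (i'.val:ℤ) - (((Fin.last ν).val : ℕ) : ℤ) = (i'.val:ℤ) - (ν:ℤ) by
        rw [Fin.val_last]; omega)]
  have hcs : ∀ l : Fin ν, Tmat m 0 (ν+1) i' l.castSucc *
      (Fin.lastCases (motive := fun _ => R) (chi m ν)
        (fun l => dd m ν l - bb m ν l * chi m ν) l.castSucc)
      = m ((i'.val:ℤ) - (l.val:ℤ)) * dd m ν l - m ((i'.val:ℤ) - (l.val:ℤ)) * bb m ν l * chi m ν := by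
    intro l
    rw [Fin.lastCases_castSucc, Tmat, Matrix.of_apply]
    rw [mcg m (show
      (0:ℤ) + (i'.val:ℤ) - (((l.castSucc).val : ℕ) : ℤ) = (i'.val:ℤ) - (l.val:ℤ) by
        rw [Fin.coe_castSucc]; omega)]
    rw [mul_sub, mul_assoc]
  rw [hlast, Finset.sum_congr rfl fun l _ => hcs l, Finset.sum_sub_distrib, ← Finset.sum_mul]
  rcases lt_or_ge i'.val ν with hlt | hge
  · rw [show (∑ l : Fin ν, m ((i'.val:ℤ) - (l.val:ℤ)) * dd m ν l) = m ((i'.val:ℤ) - ν - 1) from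
      Td_row hT2 ⟨i'.val, hlt⟩,
      show (∑ l : Fin ν, m ((i'.val:ℤ) - (l.val:ℤ)) * bb m ν l) = m ((i'.val:ℤ) - ν) from
      Tb_row hT2 ⟨i'.val, hlt⟩]
    abel
  · have hiv : i'.val = ν := by have := i'.isLt; omega
    have hd2 : (∑ l : Fin ν, m ((i'.val:ℤ) - (l.val:ℤ)) * dd m ν l)
        = ∑ j : Fin ν, m ((ν:ℤ) - (j.val:ℤ)) * dd m ν j :=
      Finset.sum_congr rfl fun l _ => by
        rw [mcg m (by omega : (i'.val:ℤ) - (l.val:ℤ) = (ν:ℤ) - (l.val:ℤ))]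
    have hsum : (∑ l : Fin ν, m ((i'.val:ℤ) - (l.val:ℤ)) * bb m ν l)
        = m 0 - Hq m ν 0 := by
      have h2 : (∑ l : Fin ν, m ((i'.val:ℤ) - (l.val:ℤ)) * bb m ν l)
          = ∑ l : Fin ν, m ((ν:ℤ) - (l.val:ℤ)) * bb m ν l :=
        Finset.sum_congr rfl fun l _ => by
          rw [mcg m (by omega : (i'.val:ℤ) - (l.val:ℤ) = (ν:ℤ) - (l.val:ℤ))]
      rw [h2, Hq0_fold, sub_sub_cancel]
    rw [hd2, hsum, mcg m (by omega : (i'.val:ℤ) - (ν:ℤ) = (0:ℤ)),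
      mcg m (by omega : (i'.val:ℤ) - (ν:ℤ) - 1 = (-1:ℤ)),
      chi, sub_mul, mul_inv_cancel_left₀ hH1]
    abel

lemma cc_last (hT1 : IsUnit (Tmat m 0 (ν+1))) (hT2 : IsUnit (Tmat m 0 ν))
    (hH1 : Hq m ν 0 ≠ 0) : cc m ν (Fin.last ν) = chi m ν := by
  rw [cc_struct hT1 hT2 hH1 (Fin.last ν), Fin.lastCases_last]

lemma cc_castSucc (hT1 : IsUnit (Tmat m 0 (ν+1))) (hT2 : IsUnit (Tmat m 0 ν))
    (hH1 : Hq m ν 0 ≠ 0) (l : Fin ν) :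
    cc m ν l.castSucc = dd m ν l - bb m ν l * chi m ν := by
  rw [cc_struct hT1 hT2 hH1 l.castSucc, Fin.lastCases_castSucc]

lemma sum_cases {μ : ℕ} (g : Fin (μ+1) → R) (f : Fin μ → R) :
    ∑ l, g l * (Fin.cases (motive := fun _ => R) 0 (fun l' => f l') l)
      = ∑ l : Fin μ, g l.succ * f l := by
  rw [Fin.sum_univ_succ]; simp

lemma dd_struct {μ : ℕ} (hT2 : IsUnit (Tmat m 0 (μ+1))) (hT3 : IsUnit (Tmat m (-1) (μ+1))) :
    ∀ i : Fin (μ+1), dd m (μ+1) i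
      = Fin.cases (motive := fun _ => R) 0 (fun l => yv m (μ+1) l.castSucc) i
        + bb m (μ+1) i * Yc m (μ+1) := by
  intro i
  have hY : Yc m (μ+1) = yv m (μ+1) (Fin.last μ) := by
    rw [Yc, dif_pos (by omega : 0 < μ + 1)]
    exact congrArg _ (by apply Fin.ext; simp)
  refine unique_sol (Tmat m 0 (μ+1)) hT2 (dd m (μ+1))
    (fun l => Fin.cases (motive := fun _ => R) 0 (fun l' => yv m (μ+1) l'.castSucc) l
      + bb m (μ+1) l * Yc m (μ+1)) (fun i' => ?_) i
  have lhs : ∑ l, Tmat m 0 (μ+1) i' l * dd m (μ+1) l = m ((i'.val : ℤ) - (μ+1) - 1) := by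
    rw [show m ((i'.val : ℤ) - (μ+1) - 1) = m ((i'.val : ℤ) - (μ+1 : ℕ) - 1) from
      mcg m (by push_cast; ring), ← Td_row hT2 i']
    exact Finset.sum_congr rfl fun l _ => by
      rw [Tmat, Matrix.of_apply, mcg m (by omega : (0:ℤ) + (i'.val:ℤ) - (l.val:ℤ) = (i'.val:ℤ) - (l.val:ℤ))]
  rw [lhs]
  have expand : ∀ l : Fin (μ+1), Tmat m 0 (μ+1) i' l *
      (Fin.cases (motive := fun _ => R) 0 (fun l' => yv m (μ+1) l'.castSucc) l
        + bb m (μ+1) l * Yc m (μ+1))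
      = m ((i'.val:ℤ) - (l.val:ℤ)) *
          Fin.cases (motive := fun _ => R) 0 (fun l' => yv m (μ+1) l'.castSucc) l
        + m ((i'.val:ℤ) - (l.val:ℤ)) * bb m (μ+1) l * Yc m (μ+1) := by
    intro l
    rw [Tmat, Matrix.of_apply,
      mcg m (by omega : (0:ℤ) + (i'.val:ℤ) - (l.val:ℤ) = (i'.val:ℤ) - (l.val:ℤ)),
      mul_add, mul_assoc]
  rw [Finset.sum_congr rfl fun l _ => expand l, Finset.sum_add_distrib, ← Finset.sum_mul]
  rw [Tb_row hT2 i', sum_cases (fun l => m ((i'.val:ℤ) - (l.val:ℤ))) (fun l => yv m (μ+1) l.castSucc)]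
  have shift : ∑ l : Fin μ, m ((i'.val:ℤ) - ((l.succ).val:ℤ)) * yv m (μ+1) l.castSucc
      = (∑ x : Fin (μ+1), m ((i'.val:ℤ) - 1 - (x.val:ℤ)) * yv m (μ+1) x)
        - m ((i'.val:ℤ) - 1 - (μ:ℤ)) * yv m (μ+1) (Fin.last μ) := by
    rw [Fin.sum_univ_castSucc (f := fun x : Fin (μ+1) => m ((i'.val:ℤ) - 1 - (x.val:ℤ)) * yv m (μ+1) x)]
    simp only [Fin.val_last]
    rw [add_sub_cancel_right]
    refine Finset.sum_congr rfl fun l _ => ?_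
    simp only [Fin.val_succ, Fin.coe_castSucc]
    rw [mcg m (by omega : (i'.val:ℤ) - (((l.val:ℕ) + 1 : ℕ):ℤ) = (i'.val:ℤ) - 1 - (l.val:ℤ))]
  rw [shift, hY, Ty_row hT3 i',
    mcg m (by push_cast; ring : (i'.val:ℤ) - 1 - (μ:ℤ) = (i'.val:ℤ) - ((μ+1:ℕ):ℤ)),
    mcg m (by push_cast; ring : (i'.val:ℤ) - ((μ:ℤ)+1) - 1 = (i'.val:ℤ) - ((μ+1:ℕ):ℤ) - 1)]
  abel

lemma Yc_succ {μ : ℕ} : Yc m (μ+1) = yv m (μ+1) (Fin.last μ) := by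
  rw [Yc, dif_pos (by omega : 0 < μ + 1)]
  exact congrArg _ (by apply Fin.ext; simp)

lemma B1 (hT2 : IsUnit (Tmat m 0 ν)) (hT3 : IsUnit (Tmat m (-1) ν)) :
    m (-1) - ∑ j : Fin ν, m ((ν:ℤ) - (j.val:ℤ)) * dd m ν j
      = Hq m ν (-1) + Hq m ν 0 * Yc m ν := by
  rcases ν with _ | μ
  · simp [Hq, Yc]
  have h1 : ∑ j : Fin (μ+1), m (((μ+1:ℕ):ℤ) - (j.val:ℤ)) * dd m (μ+1) j
      = ∑ j : Fin (μ+1), m (((μ+1:ℕ):ℤ) - (j.val:ℤ)) *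
          Fin.cases (motive := fun _ => R) 0 (fun l => yv m (μ+1) l.castSucc) j
        + (∑ j : Fin (μ+1), m (((μ+1:ℕ):ℤ) - (j.val:ℤ)) * bb m (μ+1) j) * Yc m (μ+1) := by
    rw [Finset.sum_mul, ← Finset.sum_add_distrib]
    refine Finset.sum_congr rfl fun j _ => ?_
    rw [dd_struct hT2 hT3 j, mul_add, mul_assoc]
  rw [h1, sum_cases (fun l => m (((μ+1:ℕ):ℤ) - (l.val:ℤ))) (fun l => yv m (μ+1) l.castSucc)]
  have shift : ∑ l : Fin μ, m (((μ+1:ℕ):ℤ) - ((l.succ).val:ℤ)) * yv m (μ+1) l.castSucc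
      = (∑ x : Fin (μ+1), m (((μ+1:ℕ):ℤ) - 1 - (x.val:ℤ)) * yv m (μ+1) x)
        - m 0 * yv m (μ+1) (Fin.last μ) := by
    rw [Fin.sum_univ_castSucc
      (f := fun x : Fin (μ+1) => m (((μ+1:ℕ):ℤ) - 1 - (x.val:ℤ)) * yv m (μ+1) x)]
    simp only [Fin.val_last]
    rw [mcg m (by push_cast; ring : ((μ+1:ℕ):ℤ) - 1 - (μ:ℤ) = (0:ℤ)), add_sub_cancel_right]
    refine Finset.sum_congr rfl fun l _ => ?_
    simp only [Fin.val_succ, Fin.coe_castSucc]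
    rw [mcg m (by push_cast; ring : ((μ+1:ℕ):ℤ) - (((l.val:ℕ) + 1 : ℕ):ℤ) = ((μ+1:ℕ):ℤ) - 1 - (l.val:ℤ))]
  have hbb : ∑ j : Fin (μ+1), m (((μ+1:ℕ):ℤ) - (j.val:ℤ)) * bb m (μ+1) j
      = m 0 - Hq m (μ+1) 0 := by
    rw [Hq0_fold, sub_sub_cancel]
  rw [shift, hbb, Hqm1_fold, Yc_succ, sub_mul]
  abel

lemma B2 (hT2 : IsUnit (Tmat m 0 ν)) (hT3 : IsUnit (Tmat m (-1) ν)) :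
    m (-2 - (ν:ℤ)) - ∑ j : Fin ν, m (-1 - (j.val:ℤ)) * dd m ν j
      = Gq m ν (-2) + Gq m ν (-1) * Yc m ν := by
  rcases ν with _ | μ
  · simp [Gq, Yc]
  have h1 : ∑ j : Fin (μ+1), m (-1 - (j.val:ℤ)) * dd m (μ+1) j
      = ∑ j : Fin (μ+1), m (-1 - (j.val:ℤ)) *
          Fin.cases (motive := fun _ => R) 0 (fun l => yv m (μ+1) l.castSucc) j
        + (∑ j : Fin (μ+1), m (-1 - (j.val:ℤ)) * bb m (μ+1) j) * Yc m (μ+1) := by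
    rw [Finset.sum_mul, ← Finset.sum_add_distrib]
    refine Finset.sum_congr rfl fun j _ => ?_
    rw [dd_struct hT2 hT3 j, mul_add, mul_assoc]
  rw [h1, sum_cases (fun l => m (-1 - (l.val:ℤ))) (fun l => yv m (μ+1) l.castSucc)]
  have shift : ∑ l : Fin μ, m (-1 - ((l.succ).val:ℤ)) * yv m (μ+1) l.castSucc
      = (∑ x : Fin (μ+1), m (-2 - (x.val:ℤ)) * yv m (μ+1) x)
        - m (-1 - ((μ+1:ℕ):ℤ)) * yv m (μ+1) (Fin.last μ) := by
    rw [Fin.sum_univ_castSucc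
      (f := fun x : Fin (μ+1) => m (-2 - (x.val:ℤ)) * yv m (μ+1) x)]
    simp only [Fin.val_last]
    rw [mcg m (by push_cast; ring : (-2 : ℤ) - (μ:ℤ) = -1 - ((μ+1:ℕ):ℤ)), add_sub_cancel_right]
    refine Finset.sum_congr rfl fun l _ => ?_
    simp only [Fin.val_succ, Fin.coe_castSucc]
    rw [mcg m (by push_cast; ring : (-1 : ℤ) - (((l.val:ℕ) + 1 : ℕ):ℤ) = -2 - (l.val:ℤ))]
  have hbb : ∑ j : Fin (μ+1), m (-1 - (j.val:ℤ)) * bb m (μ+1) j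
      = m (-1 - ((μ+1:ℕ):ℤ)) - Gq m (μ+1) (-1) := by
    rw [Gqm1_fold, sub_sub_cancel]
  rw [shift, hbb, Gqm2_fold, Yc_succ, sub_mul]
  abel
lemma chi_eq (hT2 : IsUnit (Tmat m 0 ν)) (hT3 : IsUnit (Tmat m (-1) ν))
    (hH1 : Hq m ν 0 ≠ 0) :
    chi m ν = psi m ν 0 + Yc m ν := by
  rw [chi, B1 hT2 hT3, mul_add, inv_mul_cancel_left₀ hH1, psi,
    show (0:ℤ) - 1 = -1 by norm_num]

lemma starstar (hT1 : IsUnit (Tmat m 0 (ν+1))) (hT2 : IsUnit (Tmat m 0 ν))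
    (hT3 : IsUnit (Tmat m (-1) ν)) (hH1 : Hq m ν 0 ≠ 0) :
    Gq m (ν+1) (-1) = Gq m ν (-2) - Gq m ν (-1) * psi m ν 0 := by
  rw [GqN_fold]
  have hsplit : ∑ j : Fin (ν+1), m (-1 - (j.val:ℤ)) * cc m ν j
      = ∑ j : Fin ν, m (-1 - (j.val:ℤ)) * dd m ν j + Gq m ν (-1) * chi m ν := by
    rw [Fin.sum_univ_castSucc (f := fun j : Fin (ν+1) => m (-1 - (j.val:ℤ)) * cc m ν j)]
    simp only [Fin.val_last, Fin.coe_castSucc]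
    rw [cc_last hT1 hT2 hH1]
    have h2 : ∀ l : Fin ν, m (-1 - (l.val:ℤ)) * cc m ν l.castSucc
        = m (-1 - (l.val:ℤ)) * dd m ν l - m (-1 - (l.val:ℤ)) * bb m ν l * chi m ν := by
      intro l
      rw [cc_castSucc hT1 hT2 hH1 l, mul_sub, mul_assoc]
    rw [Finset.sum_congr rfl fun l _ => h2 l, Finset.sum_sub_distrib, ← Finset.sum_mul]
    have hbb : ∑ j : Fin ν, m (-1 - (j.val:ℤ)) * bb m ν j
        = m (-1 - (ν:ℤ)) - Gq m ν (-1) := by rw [Gqm1_fold, sub_sub_cancel]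
    rw [hbb, sub_mul]
    abel
  rw [hsplit, chi_eq hT2 hT3 hH1]
  have hB2 := B2 (m := m) (ν := ν) hT2 hT3
  have : Gq m ν (-2) = m (-2 - (ν:ℤ)) - ∑ j : Fin ν, m (-1 - (j.val:ℤ)) * dd m ν j
      - Gq m ν (-1) * Yc m ν := by rw [hB2]; abel
  rw [this, mul_add]
  abel

lemma crux (hT1 : IsUnit (Tmat m 0 (ν+1))) (hT2 : IsUnit (Tmat m 0 ν))
    (hT3 : IsUnit (Tmat m (-1) ν)) (hH1 : Hq m ν 0 ≠ 0) (hG1 : Gq m ν (-1) ≠ 0) :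
    Gq m (ν+1) (-1) = -(Gq m ν (-1) * (psi m ν 0 - phi m ν (-1))) := by
  rw [starstar hT1 hT2 hT3 hH1, mul_sub, phi, mul_inv_cancel_left₀ hG1,
    show (-1:ℤ) - 1 = -2 by norm_num]
  abel
lemma D_cc (hadd : ∀ a b : R, D (a + b) = D a + D b)
    (hmul : ∀ a b : R, D (a * b) = D a * b + a * D b)
    (hm : ∀ j : ℤ, D (m j) = m (j - 1))
    (hT1 : IsUnit (Tmat m 0 (ν+1))) (i : Fin (ν+1)) :
    D (cc m ν i) = -(ssv m ν i) - cc m ν i * cc m ν (Fin.last ν) + ww m ν i := by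
  set T := Tmat m 0 (ν+1) with hT
  set B := Ring.inverse (Tmat m 0 (ν+1)) with hB
  set v : Fin (ν+1) → R := fun j => m (0 - ((ν+1:ℕ):ℤ) + (j.val:ℤ)) with hv
  have step1 : D (cc m ν i) = (∑ j, D (B i j) * v j) + ∑ j, B i j * m (0 - ((ν+1:ℕ):ℤ) + (j.val:ℤ) - 1) := by
    rw [cc, D_sum hadd, ← Finset.sum_add_distrib]
    exact Finset.sum_congr rfl fun j _ => by rw [hmul, hm]
  have step2 : ∑ j, B i j * m (0 - ((ν+1:ℕ):ℤ) + (j.val:ℤ) - 1) = ww m ν i := by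
    rw [ww]
    exact Finset.sum_congr rfl fun j _ => by
      rw [mcg m (by omega : (0:ℤ) - ((ν+1:ℕ):ℤ) + (j.val:ℤ) - 1 = -1 - ((ν+1:ℕ):ℤ) + (j.val:ℤ))]
  have hDT : ∀ a b : Fin (ν+1), D (T a b) = m ((a.val:ℤ) - (b.val:ℤ) - 1) := by
    intro a b
    rw [hT, Tmat, Matrix.of_apply, hm,
      mcg m (by omega : (0:ℤ) + (a.val:ℤ) - (b.val:ℤ) - 1 = (a.val:ℤ) - (b.val:ℤ) - 1)]
  have step3 : ∑ j, D (B i j) * v j = -∑ a, B i a * (∑ b, m ((a.val:ℤ) - (b.val:ℤ) - 1) * cc m ν b) := by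
    have e1 : ∀ j, D (B i j) * v j
        = -∑ a, ∑ b, B i a * m ((a.val:ℤ) - (b.val:ℤ) - 1) * (B b j * v j) := by
      intro j
      rw [D_inverse hadd hmul (Tmat m 0 (ν+1)) hT1 i j, neg_mul, Finset.sum_mul]
      congr 1
      refine Finset.sum_congr rfl fun a _ => ?_
      rw [Finset.sum_mul]
      refine Finset.sum_congr rfl fun b _ => ?_
      rw [hDT a b, mul_assoc]
    rw [Finset.sum_congr rfl fun j _ => e1 j, Finset.sum_neg_distrib]
    refine congrArg Neg.neg ?_
    rw [Finset.sum_comm]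
    refine Finset.sum_congr rfl fun a _ => ?_
    rw [Finset.sum_comm, Finset.mul_sum]
    refine Finset.sum_congr rfl fun b _ => ?_
    have hccb : cc m ν b = ∑ j, B b j * v j := rfl
    rw [hccb, Finset.mul_sum, Finset.mul_sum]
    exact Finset.sum_congr rfl fun j _ => by rw [mul_assoc]
  have inner : ∀ a : Fin (ν+1), ∑ b, m ((a.val:ℤ) - (b.val:ℤ) - 1) * cc m ν b
      = (∑ l, T a l * ssv m ν l) + v a * cc m ν (Fin.last ν) := by
    intro a
    have h1 : ∑ l, T a l * ssv m ν l
        = ∑ l : Fin ν, m ((a.val:ℤ) - ((l.castSucc).val:ℤ) - 1) * cc m ν l.castSucc := by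
      rw [sum_ssv (fun l => T a l)]
      refine Finset.sum_congr rfl fun l _ => ?_
      rw [hT, Tmat, Matrix.of_apply,
        mcg m (by simp [Fin.val_succ]; omega :
          (0:ℤ) + (a.val:ℤ) - (((l.succ).val:ℕ):ℤ) = (a.val:ℤ) - (((l.castSucc).val:ℕ):ℤ) - 1)]
    rw [h1, Fin.sum_univ_castSucc (f := fun b : Fin (ν+1) => m ((a.val:ℤ) - (b.val:ℤ) - 1) * cc m ν b)]
    congr 1
    rw [hv]
    simp only [Fin.val_last]
    rw [mcg m (by push_cast; ring : (a.val:ℤ) - (ν:ℤ) - 1 = (0:ℤ) - ((ν+1:ℕ):ℤ) + (a.val:ℤ))]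
  have step4 : ∑ a, B i a * (∑ b, m ((a.val:ℤ) - (b.val:ℤ) - 1) * cc m ν b)
      = ssv m ν i + cc m ν i * cc m ν (Fin.last ν) := by
    rw [Finset.sum_congr rfl fun a _ => by rw [inner a]]
    have : ∀ a, B i a * ((∑ l, T a l * ssv m ν l) + v a * cc m ν (Fin.last ν))
        = B i a * (∑ l, T a l * ssv m ν l) + B i a * v a * cc m ν (Fin.last ν) := by
      intro a; rw [mul_add, mul_assoc]
    rw [Finset.sum_congr rfl fun a _ => this a, Finset.sum_add_distrib, ← Finset.sum_mul,
      cancel_eq (Tmat m 0 (ν+1)) hT1 (ssv m ν) i]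
    congr 1
  rw [step1, step2, step3, step4]
  abel
lemma master (hT1 : IsUnit (Tmat m 0 (ν+1))) (hT2 : IsUnit (Tmat m 0 ν))
    (hT3 : IsUnit (Tmat m (-1) ν)) (hH1 : Hq m ν 0 ≠ 0) (hG1 : Gq m ν (-1) ≠ 0)
    (i : Fin (ν+1)) :
    ww m ν i = ssv m ν i + cc m ν i * cc m ν (Fin.last ν)
      + (bbv m ν i - cc m ν i) * (psi m ν 0 - phi m ν (-1)) := by
  set ξ := psi m ν 0 - phi m ν (-1) with hxi
  refine unique_sol (Tmat m 0 (ν+1)) hT1 (ww m ν)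
    (fun l => ssv m ν l + cc m ν l * cc m ν (Fin.last ν) + (bbv m ν l - cc m ν l) * ξ)
    (fun i' => ?_) i
  have tmat_eq : ∀ l : Fin (ν+1), Tmat m 0 (ν+1) i' l = m ((i'.val:ℤ) - (l.val:ℤ)) := by
    intro l
    rw [Tmat, Matrix.of_apply,
      mcg m (by omega : (0:ℤ) + (i'.val:ℤ) - (l.val:ℤ) = (i'.val:ℤ) - (l.val:ℤ))]
  have lhs : ∑ l, Tmat m 0 (ν+1) i' l * ww m ν l = m ((i'.val:ℤ) - (ν:ℤ) - 2) := by
    rw [← Tw_row hT1 i']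
    exact Finset.sum_congr rfl fun l _ => by rw [tmat_eq l]
  rw [lhs]
  have expand : ∀ l : Fin (ν+1), Tmat m 0 (ν+1) i' l *
      (ssv m ν l + cc m ν l * cc m ν (Fin.last ν) + (bbv m ν l - cc m ν l) * ξ)
      = m ((i'.val:ℤ) - (l.val:ℤ)) * ssv m ν l
        + m ((i'.val:ℤ) - (l.val:ℤ)) * cc m ν l * cc m ν (Fin.last ν)
        + (m ((i'.val:ℤ) - (l.val:ℤ)) * bbv m ν l - m ((i'.val:ℤ) - (l.val:ℤ)) * cc m ν l) * ξ := by
    intro l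
    rw [tmat_eq l, mul_add, mul_add, ← mul_assoc, ← mul_assoc,
      mul_sub (m ((i'.val:ℤ) - (l.val:ℤ))) (bbv m ν l) (cc m ν l)]
  rw [Finset.sum_congr rfl fun l _ => expand l, Finset.sum_add_distrib, Finset.sum_add_distrib,
    ← Finset.sum_mul, ← Finset.sum_mul, Finset.sum_sub_distrib]
  have S2 : ∑ l, m ((i'.val:ℤ) - (l.val:ℤ)) * cc m ν l = m ((i'.val:ℤ) - (ν:ℤ) - 1) :=
    Tc_row hT1 i'
  have S1 : ∑ l, m ((i'.val:ℤ) - (l.val:ℤ)) * ssv m ν l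
      = (∑ x : Fin (ν+1), m ((i'.val:ℤ) - 1 - (x.val:ℤ)) * cc m ν x)
        - m ((i'.val:ℤ) - (ν:ℤ) - 1) * cc m ν (Fin.last ν) := by
    rw [sum_ssv (fun l => m ((i'.val:ℤ) - (l.val:ℤ)))]
    rw [Fin.sum_univ_castSucc (f := fun x : Fin (ν+1) => m ((i'.val:ℤ) - 1 - (x.val:ℤ)) * cc m ν x)]
    simp only [Fin.val_last]
    rw [mcg m (by omega : (i'.val:ℤ) - 1 - (ν:ℤ) = (i'.val:ℤ) - (ν:ℤ) - 1), add_sub_cancel_right]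
    refine Finset.sum_congr rfl fun l _ => ?_
    simp only [Fin.val_succ, Fin.coe_castSucc]
    rw [mcg m (by push_cast; omega : (i'.val:ℤ) - (((l.val:ℕ)+1:ℕ):ℤ) = (i'.val:ℤ) - 1 - (l.val:ℤ))]
  have S3 : ∑ l, m ((i'.val:ℤ) - (l.val:ℤ)) * bbv m ν l
      = ∑ l : Fin ν, m ((i'.val:ℤ) - 1 - (l.val:ℤ)) * bb m ν l := by
    rw [sum_bbv (fun l => m ((i'.val:ℤ) - (l.val:ℤ)))]
    refine Finset.sum_congr rfl fun l _ => ?_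
    simp only [Fin.val_succ]
    rw [mcg m (by push_cast; omega : (i'.val:ℤ) - (((l.val:ℕ)+1:ℕ):ℤ) = (i'.val:ℤ) - 1 - (l.val:ℤ))]
  rw [S1, S2, S3]
  rcases Nat.eq_zero_or_pos i'.val with hz | hpos
  · -- row 0 : uses the crux identity
    have hc1 : ∑ x : Fin (ν+1), m ((i'.val:ℤ) - 1 - (x.val:ℤ)) * cc m ν x
        = ∑ x : Fin (ν+1), m (-1 - (x.val:ℤ)) * cc m ν x :=
      Finset.sum_congr rfl fun x _ => by
        rw [mcg m (by omega : (i'.val:ℤ) - 1 - (x.val:ℤ) = -1 - (x.val:ℤ))]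
    have hc3 : ∑ l : Fin ν, m ((i'.val:ℤ) - 1 - (l.val:ℤ)) * bb m ν l
        = m (-1 - (ν:ℤ)) - Gq m ν (-1) := by
      rw [show (∑ l : Fin ν, m ((i'.val:ℤ) - 1 - (l.val:ℤ)) * bb m ν l)
          = ∑ l : Fin ν, m (-1 - (l.val:ℤ)) * bb m ν l from
        Finset.sum_congr rfl fun l _ => by
          rw [mcg m (by omega : (i'.val:ℤ) - 1 - (l.val:ℤ) = -1 - (l.val:ℤ))],
        Gqm1_fold, sub_sub_cancel]
    rw [hc1, hc3,
      mcg m (by omega : (i'.val:ℤ) - (ν:ℤ) - 1 = -1 - (ν:ℤ)),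
      mcg m (by omega : (i'.val:ℤ) - (ν:ℤ) - 2 = -2 - (ν:ℤ))]
    have hcrux : -(Gq m ν (-1) * ξ) = m (-2 - (ν:ℤ)) - ∑ x : Fin (ν+1), m (-1 - (x.val:ℤ)) * cc m ν x := by
      rw [hxi, ← crux hT1 hT2 hT3 hH1 hG1, GqN_fold]
    have hG : (m (-1 - (ν:ℤ)) - Gq m ν (-1) - m (-1 - (ν:ℤ))) * ξ
        = -(Gq m ν (-1) * ξ) := by
      rw [show m (-1 - (ν:ℤ)) - Gq m ν (-1) - m (-1 - (ν:ℤ)) = -Gq m ν (-1) by abel, neg_mul]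
    rw [hG, hcrux]
    abel
  · -- rows ≥ 1
    have hlt : i'.val - 1 < ν + 1 := by have := i'.isLt; omega
    have hlt2 : i'.val - 1 < ν := by have := i'.isLt; omega
    have hc1 : ∑ x : Fin (ν+1), m ((i'.val:ℤ) - 1 - (x.val:ℤ)) * cc m ν x
        = m ((i'.val:ℤ) - (ν:ℤ) - 2) := by
      have := Tc_row hT1 ⟨i'.val - 1, hlt⟩
      simp only at this
      rw [show (∑ x : Fin (ν+1), m ((i'.val:ℤ) - 1 - (x.val:ℤ)) * cc m ν x)
          = ∑ x : Fin (ν+1), m ((((i'.val - 1 : ℕ)):ℤ) - (x.val:ℤ)) * cc m ν x from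
        Finset.sum_congr rfl fun x _ => by
          rw [mcg m (by omega : (i'.val:ℤ) - 1 - (x.val:ℤ) = (((i'.val - 1:ℕ)):ℤ) - (x.val:ℤ))],
        this, mcg m (by omega : (((i'.val - 1:ℕ)):ℤ) - (ν:ℤ) - 1 = (i'.val:ℤ) - (ν:ℤ) - 2)]
    have hc3 : ∑ l : Fin ν, m ((i'.val:ℤ) - 1 - (l.val:ℤ)) * bb m ν l
        = m ((i'.val:ℤ) - (ν:ℤ) - 1) := by
      have := Tb_row hT2 ⟨i'.val - 1, hlt2⟩
      simp only at this
      rw [show (∑ l : Fin ν, m ((i'.val:ℤ) - 1 - (l.val:ℤ)) * bb m ν l)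
          = ∑ l : Fin ν, m ((((i'.val - 1 : ℕ)):ℤ) - (l.val:ℤ)) * bb m ν l from
        Finset.sum_congr rfl fun l _ => by
          rw [mcg m (by omega : (i'.val:ℤ) - 1 - (l.val:ℤ) = (((i'.val - 1:ℕ)):ℤ) - (l.val:ℤ))],
        this, mcg m (by omega : (((i'.val - 1:ℕ)):ℤ) - (ν:ℤ) = (i'.val:ℤ) - (ν:ℤ) - 1)]
    rw [hc1, hc3, sub_self, zero_mul]
    abel
lemma D_final (hadd : ∀ a b : R, D (a + b) = D a + D b)
    (hmul : ∀ a b : R, D (a * b) = D a * b + a * D b)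
    (hm : ∀ j : ℤ, D (m j) = m (j - 1))
    (hT1 : IsUnit (Tmat m 0 (ν+1))) (hT2 : IsUnit (Tmat m 0 ν))
    (hT3 : IsUnit (Tmat m (-1) ν)) (hH1 : Hq m ν 0 ≠ 0) (hG1 : Gq m ν (-1) ≠ 0)
    (i : Fin (ν+1)) :
    D (cc m ν i) = (bbv m ν i - cc m ν i) * (psi m ν 0 - phi m ν (-1)) := by
  rw [D_cc hadd hmul hm hT1 i, master hT1 hT2 hT3 hH1 hG1 i]
  abel

lemma bbv_zero : bbv m ν 0 = 0 := by simp [bbv]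

lemma bbv_mk (k : ℕ) (h : k < ν + 1) (hk : 0 < k) :
    bbv m ν ⟨k, h⟩ = bb m ν ⟨k - 1, by omega⟩ := by
  have hsucc : (⟨k, h⟩ : Fin (ν+1)) = (⟨k - 1, by omega⟩ : Fin ν).succ := by
    apply Fin.ext; simp [Fin.val_succ]; omega
  rw [hsucc]; simp [bbv]

end Setup
end S18

theorem stmt_18 {R : Type*} [DivisionRing R] (m : ℤ → R) (D : R → R)
    (hD_add : ∀ a b : R, D (a + b) = D a + D b)
    (hD_mul : ∀ a b : R, D (a * b) = D a * b + a * D b)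
    (hm : ∀ j : ℤ, D (m j) = m (j - 1))
    (n : ℕ) (hn : 1 ≤ n)
    (hT1 : IsUnit (Tmat m 0 n))
    (hT2 : IsUnit (Tmat m 0 (n - 1)))
    (hT3 : IsUnit (Tmat m (-1) (n - 1)))
    (hH1 : Hq m (n - 1) 0 ≠ 0)
    (hH2 : Hq m (n - 1) (-1) ≠ 0)
    (hG1 : Gq m (n - 1) (-1) ≠ 0)
    (hG2 : Gq m (n - 1) (-2) ≠ 0) :
    ∀ r : ℤ,
      D (Qs m 0 n r)
        = (Qs m 0 (n - 1) (r + 1) - Qs m 0 n r) *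
            (psi m (n - 1) 0 - phi m (n - 1) (-1)) := by
  intro r
  obtain ⟨ν, rfl⟩ : ∃ ν, n = ν + 1 := ⟨n - 1, by omega⟩
  have hT2' : IsUnit (Tmat m 0 ν) := hT2
  have hT3' : IsUnit (Tmat m (-1) ν) := hT3
  have hH1' : Hq m ν 0 ≠ 0 := hH1
  have hG1' : Gq m ν (-1) ≠ 0 := hG1
  simp only [Nat.add_sub_cancel]
  by_cases h1 : r = -((ν+1 : ℕ) : ℤ)
  · -- leading coefficient
    have hq1 : Qs m 0 (ν+1) r = 1 := by rw [Qs, if_pos h1]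
    have hq2 : Qs m 0 ν (r + 1) = 1 := by
      have : r + 1 = -(ν : ℤ) := by rw [h1]; push_cast; ring
      rw [Qs, if_pos this]
    rw [hq1, hq2, S18.D_one hD_mul, sub_self, zero_mul]
  by_cases h2 : -((ν+1 : ℕ) : ℤ) < r ∧ r ≤ 0
  · -- main range
    have hlt : (-r).toNat < ν + 1 := by omega
    set i : Fin (ν+1) := ⟨(-r).toNat, hlt⟩ with hi
    have hq1 : Qs m 0 (ν+1) r = -(S18.cc m ν i) := by
      rw [Qs, if_neg h1, dif_pos h2]
      rfl
    rw [hq1, S18.D_neg hD_add,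
      S18.D_final hD_add hD_mul hm hT1 hT2' hT3' hH1' hG1' i, sub_neg_eq_add]
    have key : Qs m 0 ν (r + 1) = -(S18.bbv m ν i) := by
      rcases eq_or_lt_of_le h2.2 with hr0 | hrneg
      · -- r = 0
        have htn : (-r).toNat = 0 := by omega
        have hi0 : i = 0 := by apply Fin.ext; simp [hi, htn]
        have : Qs m 0 ν (r + 1) = 0 := by
          rw [Qs, if_neg (by omega), dif_neg (by omega)]
        rw [this, hi0, S18.bbv_zero, neg_zero]
      · -- r < 0
        have hk : 0 < (-r).toNat := by omega
        have hcond : -((ν : ℕ) : ℤ) < r + 1 ∧ r + 1 ≤ 0 := by omega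
        have hne : r + 1 ≠ -((ν : ℕ) : ℤ) := by omega
        rw [Qs, if_neg hne, dif_pos hcond, S18.bbv_mk ((-r).toNat) hlt hk]
        have hidx : (⟨(-(r+1)).toNat, by omega⟩ : Fin ν)
            = (⟨(-r).toNat - 1, by omega⟩ : Fin ν) := by
          apply Fin.ext; simp; omega
        rw [hidx]
        rfl
    rw [key, ← neg_mul, neg_sub]
    congr 1
    abel
  · -- out of range
    have hq1 : Qs m 0 (ν+1) r = 0 := by rw [Qs, if_neg h1, dif_neg h2]
    have hq2 : Qs m 0 ν (r + 1) = 0 := by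
      rw [Qs, if_neg (by omega), dif_neg (by omega)]
    rw [hq1, hq2, S18.D_zero hD_add, sub_zero, zero_mul]
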